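/- Let P ⊆ ℝ^d be a d-polytope with 0 in its interior, n prime, and k a positive integer with kn ≥ d. For every point (x₁,…,xₙ) in the (n−1)-skeleton of C = P^n ∩ W_n^{⊕d}, there exists an index i with xᵢ ∈ P^{(k)}. -/

import Mathlib

open Metric Set

def IsPolytope {E : Type*} [AddCommGroup E] [Module ℝ E] (P : Set E) : Prop :=
  ∃ V : Finset E, P = convexHull ℝ (V : Set E)

noncomputable def polyDim {E : Type*} [AddCommGroup E] [Module ℝ E] (P : Set E) : ℕ :=
  Module.finrank ℝ (vectorSpan ℝ P)

/-- The `k`-skeleton of a polytope `P`: the union of all (exposed) faces of dimension at most `k`. -/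
def skeleton {E : Type*} [AddCommGroup E] [Module ℝ E] [TopologicalSpace E]
    (P : Set E) (k : ℕ) : Set E :=
  {x | ∃ F : Set E, IsExposed ℝ P F ∧ polyDim F ≤ k ∧ x ∈ F}

section basic
variable {E : Type*} [AddCommGroup E] [Module ℝ E]

/-- shrink a movement inside a convex set -/
lemma convex_shrink {P : Set E} (hP : Convex ℝ P) {x v : E} (hx : x ∈ P)
    {s t : ℝ} (hs : x + s • v ∈ P) (ht0 : 0 ≤ t) (hts : t ≤ s) (hs0 : 0 < s) :
    x + t • v ∈ P := by
  have key : x + t • v = (1 - t/s) • x + (t/s) • (x + s • v) := by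
    have h : (t/s) * s = t := div_mul_cancel₀ t hs0.ne'
    rw [smul_add, smul_smul, h]
    module
  rw [key]
  exact hP hx hs (by have := div_le_one_of_le₀ hts hs0.le; linarith)
    (by positivity) (by ring)

/-- The set of directions in which one can move from `x` in both directions staying in `P`,
as a submodule (requires `P` convex, `x ∈ P`). -/
def Dsub (P : Set E) (hP : Convex ℝ P) {x : E} (hx : x ∈ P) : Submodule ℝ E where
  carrier := {v | ∃ t : ℝ, 0 < t ∧ x + t • v ∈ P ∧ x - t • v ∈ P}
  zero_mem' := ⟨1, one_pos, by simpa, by simpa⟩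
  add_mem' := by
    rintro v w ⟨t, ht, htp, htm⟩ ⟨s, hs, hsp, hsm⟩
    set m := min t s with hm
    have hm0 : 0 < m := lt_min ht hs
    refine ⟨m/2, by positivity, ?_, ?_⟩
    · have h1 : x + m • v ∈ P := convex_shrink hP hx htp hm0.le (min_le_left _ _) ht
      have h2 : x + m • w ∈ P := convex_shrink hP hx hsp hm0.le (min_le_right _ _) hs
      have key : x + (m/2) • (v + w) = (1/2 : ℝ) • (x + m • v) + (1/2 : ℝ) • (x + m • w) := by
        module
      rw [key]
      exact hP h1 h2 (by norm_num) (by norm_num) (by norm_num)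
    · have h1 : x + m • (-v) ∈ P := by
        refine convex_shrink hP hx ?_ hm0.le (min_le_left _ _) ht
        rw [smul_neg, ← sub_eq_add_neg]; exact htm
      have h2 : x + m • (-w) ∈ P := by
        refine convex_shrink hP hx ?_ hm0.le (min_le_right _ _) hs
        rw [smul_neg, ← sub_eq_add_neg]; exact hsm
      have key : x - (m/2) • (v + w) = (1/2 : ℝ) • (x + m • (-v)) + (1/2 : ℝ) • (x + m • (-w)) := by
        module
      rw [key]
      exact hP h1 h2 (by norm_num) (by norm_num) (by norm_num)
  smul_mem' := by
    have hpos : ∀ c : ℝ, 0 < c → ∀ v : E,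
        (∃ t : ℝ, 0 < t ∧ x + t • v ∈ P ∧ x - t • v ∈ P) →
        (∃ t : ℝ, 0 < t ∧ x + t • (c • v) ∈ P ∧ x - t • (c • v) ∈ P) := by
      rintro c hc v ⟨t, ht, htp, htm⟩
      refine ⟨t / c, by positivity, ?_, ?_⟩
      · rw [smul_smul, div_mul_cancel₀ t hc.ne']; exact htp
      · rw [smul_smul, div_mul_cancel₀ t hc.ne']; exact htm
    have hneg : ∀ v : E,
        (∃ t : ℝ, 0 < t ∧ x + t • v ∈ P ∧ x - t • v ∈ P) →
        (∃ t : ℝ, 0 < t ∧ x + t • (-v) ∈ P ∧ x - t • (-v) ∈ P) := by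
      rintro v ⟨t, ht, htp, htm⟩
      exact ⟨t, ht, by rwa [smul_neg, ← sub_eq_add_neg],
        by rwa [smul_neg, sub_neg_eq_add]⟩
    rintro c v hv
    rcases lt_trichotomy c 0 with h | rfl | h
    · have heq : c • v = (-c) • (-v) := by simp
      show c • v ∈ {v | ∃ t : ℝ, 0 < t ∧ x + t • v ∈ P ∧ x - t • v ∈ P}
      rw [Set.mem_setOf_eq, heq]
      exact hpos (-c) (by linarith) _ (hneg v hv)
    · show (0:ℝ) • v ∈ {v | ∃ t : ℝ, 0 < t ∧ x + t • v ∈ P ∧ x - t • v ∈ P}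
      rw [Set.mem_setOf_eq, zero_smul]
      exact ⟨1, one_pos, by simpa, by simpa⟩
    · exact hpos c h v hv

lemma mem_Dsub {P : Set E} {hP : Convex ℝ P} {x : E} {hx : x ∈ P} {v : E} :
    v ∈ Dsub P hP hx ↔ ∃ t : ℝ, 0 < t ∧ x + t • v ∈ P ∧ x - t • v ∈ P := Iff.rfl

end basic

section basic
variable {E : Type*} [AddCommGroup E] [Module ℝ E]

/-- If `x` is a convex combination of points of `P` with positive weight on `p j₀`, one can
move from `x` a bit in the direction opposite to `p j₀ - x` while staying in `P`. -/
lemma moveback {P : Set E} (hP : Convex ℝ P) {ι : Type*} {t : Finset ι} {w : ι → ℝ}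
    {p : ι → E} (hw0 : ∀ j ∈ t, 0 ≤ w j) (hw1 : ∑ j ∈ t, w j = 1)
    (hp : ∀ j ∈ t, p j ∈ P) {x : E} (hx : x = ∑ j ∈ t, w j • p j)
    {j₀ : ι} (hj₀ : j₀ ∈ t) :
    x - (w j₀) • (p j₀ - x) ∈ P := by
  classical
  set W : ι → ℝ := fun j => (1 + w j₀) * w j - if j = j₀ then w j₀ else 0 with hW
  have hsum : ∑ j ∈ t, W j = 1 := by
    rw [hW]
    simp only [Finset.sum_sub_distrib, ← Finset.mul_sum, hw1,
      Finset.sum_ite_eq' t j₀ (fun _ => w j₀), if_pos hj₀]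
    ring
  have hnn : ∀ j ∈ t, 0 ≤ W j := by
    intro j hj
    show (0:ℝ) ≤ (1 + w j₀) * w j - if j = j₀ then w j₀ else 0
    by_cases h : j = j₀
    · subst h
      rw [if_pos rfl]
      nlinarith [hw0 j hj]
    · rw [if_neg h, sub_zero]
      nlinarith [hw0 j hj, hw0 j₀ hj₀]
  have hval : x - (w j₀) • (p j₀ - x) = ∑ j ∈ t, W j • p j := by
    have step : ∑ j ∈ t, W j • p j
        = (1 + w j₀) • (∑ j ∈ t, w j • p j) - w j₀ • p j₀ := by
      calc ∑ j ∈ t, W j • p j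
          = ∑ j ∈ t, (((1 + w j₀) * w j) • p j - (if j = j₀ then w j₀ • p j₀ else 0)) := by
            refine Finset.sum_congr rfl fun j hj => ?_
            by_cases h : j = j₀ <;> simp [hW, h, sub_smul]
        _ = (1 + w j₀) • (∑ j ∈ t, w j • p j) - w j₀ • p j₀ := by
            rw [Finset.sum_sub_distrib, Finset.sum_ite_eq' t j₀ (fun _ => w j₀ • p j₀),
              if_pos hj₀, Finset.smul_sum]
            simp [mul_smul]
    rw [step, ← hx]
    module
  rw [hval]
  exact hP.sum_mem hnn hsum hp

end basic

section normed
variable {E : Type*} [NormedAddCommGroup E] [NormedSpace ℝ E]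

/-- Two-sided directions at a point of an exposed face lie in the vector span of the face. -/
lemma Dsub_le_vectorSpan_of_isExposed {C F : Set E} (hC : Convex ℝ C)
    (hF : IsExposed ℝ C F) {x : E} (hxF : x ∈ F) :
    Dsub C hC (hF.subset hxF) ≤ vectorSpan ℝ F := by
  obtain ⟨l, hl⟩ := hF ⟨x, hxF⟩
  intro v hv
  obtain ⟨t, ht, htp, htm⟩ := hv
  have hxC : x ∈ C := hF.subset hxF
  have hxmax : ∀ z ∈ C, l z ≤ l x := by
    have := hl ▸ hxF
    exact this.2
  have hlv : l v = 0 := by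
    have h1 : l (x + t • v) ≤ l x := hxmax _ htp
    have h2 : l (x - t • v) ≤ l x := hxmax _ htm
    simp only [map_add, map_sub, map_smul, smul_eq_mul] at h1 h2
    nlinarith
  have hmem : x + t • v ∈ F := by
    rw [hl]
    refine ⟨htp, fun z hz => ?_⟩
    have := hxmax z hz
    simp only [map_add, map_smul, smul_eq_mul, hlv]
    linarith
  have hsub : (x + t • v) - x ∈ vectorSpan ℝ F := by
    rw [vectorSpan_def]
    exact Submodule.subset_span (Set.sub_mem_sub hmem hxF)
  have : t • v ∈ vectorSpan ℝ F := by simpa using hsub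
  have := (vectorSpan ℝ F).smul_mem t⁻¹ this
  rwa [smul_smul, inv_mul_cancel₀ ht.ne', one_smul] at this

end normed
section euclid
variable {E : Type*} [NormedAddCommGroup E] [InnerProductSpace ℝ E] [FiniteDimensional ℝ E]

lemma exists_exposed_face_vectorSpan_le (V : Finset E) {x : E}
    (hx : x ∈ convexHull ℝ (V : Set E)) :
    ∃ F : Set E, IsExposed ℝ (convexHull ℝ (V : Set E)) F ∧ x ∈ F ∧
      vectorSpan ℝ F ≤ Dsub (convexHull ℝ (V : Set E)) (convex_convexHull ℝ _) hx := by
  classical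
  set P : Set E := convexHull ℝ (V : Set E) with hPdef
  have hPc : Convex ℝ P := convex_convexHull ℝ _
  set D : Submodule ℝ E := Dsub P hPc hx with hDdef
  set W : Submodule ℝ E := Dᗮ with hWdef
  set Qc : E →L[ℝ] E := W.subtypeL.comp (Submodule.orthogonalProjectionOnto W) with hQdef
  have hQD : ∀ w ∈ D, Qc w = 0 := by
    intro w hw
    have hw' : w ∈ Wᗮ := by
      rw [hWdef, Submodule.orthogonal_orthogonal]
      exact hw
    simp [hQdef, Submodule.orthogonalProjectionOnto_eq_zero_iff.2 hw']
  -- the "bad" vertices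
  set T : Set E := {v ∈ (V : Set E) | v - x ∉ D} with hTdef
  set A : Set E := convexHull ℝ ((fun v => Qc (v - x)) '' T) with hAdef
  -- step 1 : 0 ∉ A
  have claim0 : (0 : E) ∉ A := by
    intro h0
    rw [hAdef, convexHull_eq] at h0
    obtain ⟨ι, t, w, z, hw0, hw1, hz, hcm⟩ := h0
    rw [Finset.centerMass_eq_of_sum_1 _ _ hw1] at hcm
    -- choose vertices
    have hv : ∀ i ∈ t, ∃ v ∈ T, Qc (v - x) = z i := fun i hi => hz i hi
    choose! v hvT hvQ using hv
    set u : E := ∑ i ∈ t, w i • (v i - x) with hudef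
    have hQu : Qc u = 0 := by
      rw [hudef, map_sum]
      rw [← hcm]
      refine Finset.sum_congr rfl fun i hi => ?_
      rw [map_smul, hvQ i hi]
    have huD : u ∈ D := by
      have : Submodule.orthogonalProjectionOnto W u = 0 := by
        have := hQu
        rw [hQdef] at this
        exact Subtype.ext this
      have huW : u ∈ Wᗮ := Submodule.orthogonalProjectionOnto_eq_zero_iff.1 this
      rw [hWdef, Submodule.orthogonal_orthogonal] at huW
      exact huW
    obtain ⟨s, hs, hsp, hsm⟩ := huD
    -- find a positively weighted index
    have hex : ∃ i ∈ t, 0 < w i := by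
      by_contra h
      push_neg at h
      have : ∑ i ∈ t, w i = 0 :=
        Finset.sum_eq_zero fun i hi => le_antisymm (h i hi) (hw0 i hi)
      rw [hw1] at this
      norm_num at this
    obtain ⟨i₀, hi₀t, hi₀⟩ := hex
    -- the convex representation of x
    set a : ℝ := 1 / (1 + s) with hadef
    have ha0 : 0 < a := by positivity
    have ha1 : a < 1 := by
      rw [hadef]
      rw [div_lt_one (by linarith)]
      linarith
    have hq : (∑ i ∈ t, w i • v i) ∈ P := by
      refine hPc.sum_mem hw0 hw1 fun i hi => ?_
      exact subset_convexHull ℝ _ (hvT i hi).1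
    have hr : x - s • u ∈ P := hsm
    -- x = a • (x - s•u) + ∑ ((1-a) * w i) • v i
    have hrepr : x = a • (x - s • u) + ∑ i ∈ t, ((1 - a) * w i) • v i := by
      have h1 : ∑ i ∈ t, ((1 - a) * w i) • v i = (1 - a) • (∑ i ∈ t, w i • v i) := by
        rw [Finset.smul_sum]
        exact Finset.sum_congr rfl fun i hi => by rw [smul_smul]
      have h2 : ∑ i ∈ t, w i • v i = u + x := by
        have e : u = (∑ i ∈ t, w i • v i) - x := by
          rw [hudef]
          simp only [smul_sub]
          rw [Finset.sum_sub_distrib, ← Finset.sum_smul, hw1, one_smul]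
        rw [e]
        abel
      rw [h1, h2]
      have ha : a * (1 + s) = 1 := by
        rw [hadef]
        field_simp
      have : a • (x - s • u) + (1 - a) • (u + x) = x + (1 - a * (1 + s)) • u := by
        module
      rw [this, ha]
      simp
    -- apply moveback over Option ι
    set t' : Finset (Option ι) := insert none (t.image some) with ht'def
    set w' : Option ι → ℝ := fun o => o.elim a (fun i => (1 - a) * w i) with hw'def
    set p' : Option ι → E := fun o => o.elim (x - s • u) v with hp'def
    have hnone : none ∉ t.image some := by simp
    have hw'0 : ∀ j ∈ t', 0 ≤ w' j := by
      rintro (_ | j) hj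
      · exact ha0.le
      · have hjt : j ∈ t := by
          rcases Finset.mem_insert.1 hj with h | h
          · exact absurd h (by simp)
          · simpa using h
        have := hw0 j hjt
        have : 0 ≤ (1 - a) * w j := mul_nonneg (by linarith) this
        simpa [hw'def]
    have hw'1 : ∑ j ∈ t', w' j = 1 := by
      rw [ht'def, Finset.sum_insert hnone,
        Finset.sum_image (fun x _ y _ h => Option.some_injective _ h)]
      simp only [hw'def, Option.elim]
      rw [← Finset.mul_sum, hw1]
      ring
    have hp'P : ∀ j ∈ t', p' j ∈ P := by
      rintro (_ | j) hj
      · exact hr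
      · have hjt : j ∈ t := by
          rcases Finset.mem_insert.1 hj with h | h
          · exact absurd h (by simp)
          · simpa using h
        exact subset_convexHull ℝ _ (hvT j hjt).1
    have hxrep : x = ∑ j ∈ t', w' j • p' j := by
      rw [ht'def, Finset.sum_insert hnone,
        Finset.sum_image (fun x _ y _ h => Option.some_injective _ h)]
      simpa [hw'def, hp'def] using hrepr
    have hsome : some i₀ ∈ t' := by
      rw [ht'def]
      exact Finset.mem_insert_of_mem (Finset.mem_image_of_mem _ hi₀t)
    have hmb := moveback hPc hw'0 hw'1 hp'P hxrep hsome
    -- conclude v i₀ - x ∈ D, contradiction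
    set c : ℝ := (1 - a) * w i₀ with hcdef
    have hc0 : 0 < c := mul_pos (by linarith) hi₀
    have hc1 : c ≤ 1 := by
      have hwle : w i₀ ≤ 1 := by
        rw [← hw1]
        exact Finset.single_le_sum hw0 hi₀t
      nlinarith
    have hplus : x + c • (v i₀ - x) ∈ P := by
      have := hPc hx (subset_convexHull ℝ _ (hvT i₀ hi₀t).1) (by linarith : (0:ℝ) ≤ 1 - c)
        hc0.le (by ring)
      have heq : (1 - c) • x + c • (v i₀) = x + c • (v i₀ - x) := by module
      rwa [heq] at this
    have hminus : x - c • (v i₀ - x) ∈ P := by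
      have : w' (some i₀) • (p' (some i₀) - x) = c • (v i₀ - x) := by
        simp [hw'def, hp'def, hcdef]
      rwa [this] at hmb
    exact (hvT i₀ hi₀t).2 ⟨c, hc0, hplus, hminus⟩
  -- step 2 : separation
  have hTfin : T.Finite := V.finite_toSet.subset (by rw [hTdef]; exact fun v hv => hv.1)
  have hAconv : Convex ℝ A := convex_convexHull ℝ _
  have hAclosed : IsClosed A := ((hTfin.image _).isCompact_convexHull ℝ).isClosed
  obtain ⟨f, u₀, hfu, hu0⟩ := geometric_hahn_banach_closed_point hAconv hAclosed claim0
  have hu0' : u₀ < 0 := by simpa using hu0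
  set l : E →L[ℝ] ℝ := f.comp Qc with hldef
  have hlD : ∀ w ∈ D, l w = 0 := fun w hw => by simp [hldef, hQD w hw]
  have hlT : ∀ v ∈ (V : Set E), v - x ∉ D → l (v - x) < 0 := by
    intro v hv hvD
    have : Qc (v - x) ∈ A := subset_convexHull ℝ _ ⟨v, ⟨hv, hvD⟩, rfl⟩
    have := (hfu _ this)
    simp only [hldef, ContinuousLinearMap.comp_apply]
    linarith
  have hlV : ∀ v ∈ (V : Set E), l v ≤ l x := by
    intro v hv
    by_cases h : v - x ∈ D
    · have := hlD _ h
      rw [map_sub] at this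
      linarith
    · have := hlT v hv h
      rw [map_sub] at this
      linarith
  -- the exposed face
  set F : Set E := {y ∈ P | ∀ z ∈ P, l z ≤ l y} with hFdef
  have hxmax : ∀ z ∈ P, l z ≤ l x := by
    intro z hz
    have hsub : (V : Set E) ⊆ {z | l z ≤ l x} := hlV
    have hconv : Convex ℝ {z | l z ≤ l x} :=
      convex_halfSpace_le ⟨fun a b => map_add l a b, fun c a => map_smul l c a⟩ (l x)
    exact convexHull_min hsub hconv hz
  have hxF : x ∈ F := ⟨hx, hxmax⟩
  refine ⟨F, fun _ => ⟨l, rfl⟩, hxF, ?_⟩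
  -- vectorSpan F ≤ D
  have hFD : ∀ y ∈ F, y - x ∈ D := by
    rintro y ⟨hyP, hymax⟩
    have hyx : l y = l x := le_antisymm (hxmax y hyP) (hymax x hx)
    obtain ⟨w, hw0, hw1, hcm⟩ := Finset.mem_convexHull.1 hyP
    rw [Finset.centerMass_eq_of_sum_1 _ _ hw1] at hcm
    simp only [id] at hcm
    have hterm : ∀ v ∈ V, (0:ℝ) ≤ w v * (l x - l v) := fun v hv =>
      mul_nonneg (hw0 v hv) (by linarith [hlV v (by exact_mod_cast hv)])
    have hsum0 : ∑ v ∈ V, w v * (l x - l v) = 0 := by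
      have hly : l y = ∑ v ∈ V, w v * l v := by
        rw [← hcm, map_sum]
        exact Finset.sum_congr rfl fun v hv => by rw [map_smul]; rfl
      have : ∑ v ∈ V, w v * (l x - l v) = (∑ v ∈ V, w v) * l x - ∑ v ∈ V, w v * l v := by
        rw [Finset.sum_mul, ← Finset.sum_sub_distrib]
        exact Finset.sum_congr rfl fun v hv => by ring
      rw [this, hw1, ← hly, hyx]
      ring
    have hzero := (Finset.sum_eq_zero_iff_of_nonneg hterm).1 hsum0
    have hvD : ∀ v ∈ V, w v ≠ 0 → v - x ∈ D := by
      intro v hv hwv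
      by_contra h
      have hlt := hlT v (by exact_mod_cast hv) h
      rw [map_sub] at hlt
      have := hzero v hv
      have hw0v := hw0 v hv
      have : w v * (l x - l v) > 0 := mul_pos (lt_of_le_of_ne hw0v (Ne.symm hwv)) (by linarith)
      linarith [hzero v hv]
    have hyxsum : y - x = ∑ v ∈ V, w v • (v - x) := by
      have h1 : ∑ v ∈ V, w v • (v - x) = (∑ v ∈ V, w v • v) - (∑ v ∈ V, w v) • x := by
        rw [Finset.sum_smul, ← Finset.sum_sub_distrib]
        exact Finset.sum_congr rfl fun v hv => smul_sub _ _ _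
      rw [h1, hcm, hw1, one_smul]
    rw [hyxsum]
    refine Submodule.sum_mem _ fun v hv => ?_
    by_cases h : w v = 0
    · rw [h, zero_smul]; exact Submodule.zero_mem _
    · exact Submodule.smul_mem _ _ (hvD v hv h)
  rw [vectorSpan_def]
  rw [Submodule.span_le]
  rintro z hz
  obtain ⟨p, hp, q, hq, rfl⟩ := hz
  have hmem := Submodule.sub_mem _ (hFD p hp) (hFD q hq)
  rw [sub_sub_sub_cancel_right] at hmem
  exact hmem

end euclid

section euclid2


/-- Let `P ⊆ ℝ^d` be a `d`-polytope with `0` in its interior, `n` prime, `k ≥ 1` with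
`k·n ≥ d`. Every point `(x₁,…,xₙ)` of the `(n−1)`-skeleton of `C = Pⁿ ∩ W_n^{⊕d}` has
some coordinate `xᵢ` in the `k`-skeleton of `P`. -/
theorem skeleton_point_has_coordinate_in_skeleton (n d k : ℕ)
    (hn : n.Prime) (hk : 0 < k) (hkn : d ≤ k * n)
    (P : Set (EuclideanSpace ℝ (Fin d))) (hP : IsPolytope P) (hPdim : polyDim P = d)
    (h0 : (0 : EuclideanSpace ℝ (Fin d)) ∈ interior P)
    (x : Fin n → EuclideanSpace ℝ (Fin d))
    (hx : x ∈ skeleton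
      {y : Fin n → EuclideanSpace ℝ (Fin d) | (∀ i, y i ∈ P) ∧ ∑ i, y i = 0} (n - 1)) :
    ∃ i, x i ∈ skeleton P k := by
  classical
  by_contra hcon
  push_neg at hcon
  have hn0 : 0 < n := hn.pos
  haveI : Nonempty (Fin n) := ⟨⟨0, hn0⟩⟩
  obtain ⟨Fc, hFexp, hFdim, hxF⟩ := hx
  obtain ⟨V, rfl⟩ := hP
  set Q : Set (EuclideanSpace ℝ (Fin d)) := convexHull ℝ (V : Set _) with hQdef
  have hPc : Convex ℝ Q := convex_convexHull ℝ _
  set C : Set (Fin n → EuclideanSpace ℝ (Fin d)) :=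
    {y | (∀ i, y i ∈ Q) ∧ ∑ i, y i = 0} with hCdef
  have hxC : x ∈ C := hFexp.subset hxF
  have hCc : Convex ℝ C := by
    rintro y ⟨hy1, hy2⟩ z ⟨hz1, hz2⟩ a b ha hb hab
    refine ⟨fun i => hPc (hy1 i) (hz1 i) ha hb hab, ?_⟩
    have : ∑ i, (a • y + b • z) i = a • ∑ i, y i + b • ∑ i, z i := by
      simp [Finset.sum_add_distrib, Finset.smul_sum]
    rw [this, hy2, hz2, smul_zero, smul_zero, add_zero]
  -- the two-sided direction subspaces at each coordinate
  set Esub : Fin n → Submodule ℝ (EuclideanSpace ℝ (Fin d)) :=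
    fun i => Dsub Q hPc (hxC.1 i) with hEdef
  have hEi : ∀ i, k + 1 ≤ Module.finrank ℝ (Esub i) := by
    intro i
    obtain ⟨F, hFe, hxFi, hle⟩ := exists_exposed_face_vectorSpan_le V (hxC.1 i)
    have hgt : k < polyDim F := by
      by_contra hle'
      push_neg at hle'
      exact hcon i ⟨F, hFe, hle', hxFi⟩
    have : polyDim F ≤ Module.finrank ℝ (Esub i) := Submodule.finrank_mono hle
    omega
  -- the two-sided direction subspace for C at x
  set DC : Submodule ℝ (Fin n → EuclideanSpace ℝ (Fin d)) := Dsub C hCc hxC with hDCdef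
  have hDCle : DC ≤ vectorSpan ℝ Fc := Dsub_le_vectorSpan_of_isExposed hCc hFexp hxF
  have hDCfin : Module.finrank ℝ DC ≤ n - 1 :=
    le_trans (Submodule.finrank_mono hDCle) hFdim
  -- the summation map
  set g : (∀ i, Esub i) →ₗ[ℝ] EuclideanSpace ℝ (Fin d) :=
    ∑ i, (Esub i).subtype.comp (LinearMap.proj i) with hgdef
  have hgapp : ∀ w : ∀ i, Esub i, g w = ∑ i, (w i : EuclideanSpace ℝ (Fin d)) := by
    intro w
    simp [hgdef]
  -- kernel of g embeds into DC
  have hkermem : ∀ w : LinearMap.ker g, (fun i => ((w : ∀ i, Esub i) i : EuclideanSpace ℝ (Fin d))) ∈ DC := by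
    rintro ⟨w, hw⟩
    have hsum : ∑ i, (w i : EuclideanSpace ℝ (Fin d)) = 0 := by
      rw [← hgapp w]
      exact hw
    have hmem : ∀ i, ∃ t : ℝ, 0 < t ∧ x i + t • (w i : EuclideanSpace ℝ (Fin d)) ∈ Q ∧
        x i - t • (w i : EuclideanSpace ℝ (Fin d)) ∈ Q := fun i => (w i).2
    choose t ht0 htp htm using hmem
    set m : ℝ := Finset.univ.inf' Finset.univ_nonempty t with hmdef
    have hm0 : 0 < m := by
      rw [hmdef, Finset.lt_inf'_iff]
      exact fun i _ => ht0 i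
    have hmle : ∀ i, m ≤ t i := fun i => Finset.inf'_le _ (Finset.mem_univ i)
    refine ⟨m, hm0, ⟨fun i => ?_, ?_⟩, ⟨fun i => ?_, ?_⟩⟩
    · show x i + m • (w i : EuclideanSpace ℝ (Fin d)) ∈ Q
      exact convex_shrink hPc (hxC.1 i) (htp i) hm0.le (hmle i) (ht0 i)
    · show ∑ i, (x i + m • (w i : EuclideanSpace ℝ (Fin d))) = 0
      rw [Finset.sum_add_distrib, ← Finset.smul_sum, hsum, hxC.2, smul_zero, add_zero]
    · show x i - m • (w i : EuclideanSpace ℝ (Fin d)) ∈ Q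
      have : x i + m • (-(w i : EuclideanSpace ℝ (Fin d))) ∈ Q := by
        refine convex_shrink hPc (hxC.1 i) ?_ hm0.le (hmle i) (ht0 i)
        rw [smul_neg, ← sub_eq_add_neg]
        exact htm i
      rwa [smul_neg, ← sub_eq_add_neg] at this
    · show ∑ i, (x i - m • (w i : EuclideanSpace ℝ (Fin d))) = 0
      rw [Finset.sum_sub_distrib, ← Finset.smul_sum, hsum, hxC.2, smul_zero, sub_zero]
  set ψ : LinearMap.ker g →ₗ[ℝ] (Fin n → EuclideanSpace ℝ (Fin d)) :=
    (LinearMap.pi fun i => (Esub i).subtype.comp (LinearMap.proj i)).comp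
      (LinearMap.ker g).subtype with hψdef
  have hψapp : ∀ (w : LinearMap.ker g) (i : Fin n),
      ψ w i = ((w : ∀ i, Esub i) i : EuclideanSpace ℝ (Fin d)) := fun w i => rfl
  set φ : LinearMap.ker g →ₗ[ℝ] DC := ψ.codRestrict DC (fun w => hkermem w) with hφdef
  have hφinj : Function.Injective φ := by
    intro w₁ w₂ h
    have h' : ψ w₁ = ψ w₂ := congrArg Subtype.val h
    apply Subtype.ext
    funext i
    apply Subtype.ext
    exact congrFun h' i
  have h5 : Module.finrank ℝ (LinearMap.ker g) ≤ Module.finrank ℝ DC :=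
    LinearMap.finrank_le_finrank_of_injective hφinj
  have h3 := LinearMap.finrank_range_add_finrank_ker g
  have h1 : Module.finrank ℝ (∀ i, Esub i) = ∑ i, Module.finrank ℝ (Esub i) :=
    Module.finrank_pi_fintype ℝ
  have h2 : n * (k + 1) ≤ ∑ i : Fin n, Module.finrank ℝ (Esub i) := by
    calc n * (k + 1) = ∑ _i : Fin n, (k + 1) := by simp [Finset.sum_const, mul_comm]
      _ ≤ ∑ i : Fin n, Module.finrank ℝ (Esub i) :=
        Finset.sum_le_sum fun i _ => hEi i
  have h4 : Module.finrank ℝ (LinearMap.range g) ≤ d := by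
    have := Submodule.finrank_le (LinearMap.range g)
    rwa [finrank_euclideanSpace_fin] at this
  have hfinal : n * (k + 1) ≤ d + (n - 1) := by
    calc n * (k + 1) ≤ ∑ i : Fin n, Module.finrank ℝ (Esub i) := h2
      _ = Module.finrank ℝ (∀ i, Esub i) := h1.symm
      _ = Module.finrank ℝ (LinearMap.range g) + Module.finrank ℝ (LinearMap.ker g) := h3.symm
      _ ≤ d + (n - 1) := add_le_add h4 (h5.trans hDCfin)
  have hfinal' : k * n + n ≤ d + (n - 1) := by
    have e : n * (k + 1) = k * n + n := by ring
    rwa [e] at hfinal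
  have hfinal'' : k * n + n ≤ k * n + (n - 1) :=
    hfinal'.trans (Nat.add_le_add_right hkn _)
  have : n ≤ n - 1 := Nat.le_of_add_le_add_left hfinal''
  omega

end euclid2
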